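/- Let 0 ≤ k < ⌊d/2⌋ and φ ∈ S_d^*. The (d−k)×(k+2) Hankel matrix M with entries M_{i,j} = Z_{i+j}, where Z_i = φ(x^{d−i} y^i), has rank at most k+1 if and only if there exist linear forms L_1,...,L_{k+1} such that φ(L_1 · L_2 ⋯ L_{k+1} · h) = 0 for all h ∈ S_{d−k−1}. -/

import Mathlib

open MvPolynomial Finset

noncomputable section

def linForm (K : Type) [Field K] (c : Fin 2 → K) : MvPolynomial (Fin 2) K :=
  C (c 0) * X 0 + C (c 1) * X 1

/-- `α` is not a scalar multiple of `β` (for nonzero vectors: distinct points of `ℙ¹`). -/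
def NonProp (K : Type) [Field K] (α β : Fin 2 → K) : Prop := ∀ t : K, α ≠ t • β

/-- The Waring rank of a binary form: the least `r` such that `q` is a sum of `r`
`d`-th powers of linear forms. -/
def waringRank (K : Type) [Field K] (d : ℕ) (q : MvPolynomial (Fin 2) K) : ℕ :=
  sInf {r : ℕ | ∃ L : Fin r → Fin 2 → K, q = ∑ i, linForm K (L i) ^ d}

theorem listProd {K : Type} [CommRing K] (l : List K) (f : K → K) :
    ∏ i ∈ Finset.range l.length, f (l.getD i 0) = (l.map f).prod := by
  calc ∏ i ∈ Finset.range l.length, f (l.getD i 0)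
      = ∏ i : Fin l.length, f (l.getD i 0) := (Fin.prod_univ_eq_prod_range _ _).symm
    _ = ∏ i : Fin l.length, f (l.get i) := by
        apply Finset.prod_congr rfl
        intro i _
        rw [List.getD_eq_getElem l 0 i.isLt]
        rfl
    _ = (List.ofFn (fun i => f (l.get i))).prod := List.prod_ofFn.symm
    _ = (l.map f).prod := by
        rw [show (fun i => f (l.get i)) = f ∘ l.get from rfl, ← List.map_ofFn, List.ofFn_get]


theorem eval_linForm {K : Type} [Field K] (c v : Fin 2 → K) :
    eval v (linForm K c) = c 0 * v 0 + c 1 * v 1 := by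
  simp [linForm]

theorem coeffP (K : Type) [Field K] (P : Polynomial K) (c : ℕ → K) (m j : ℕ)
    (hP : P = ∑ j ∈ Finset.range (m+1), Polynomial.C (c j) * Polynomial.X ^ j) (hj : j ≤ m) :
    P.coeff j = c j := by
  rw [hP, Polynomial.finset_sum_coeff]
  simp only [Polynomial.coeff_C_mul, Polynomial.coeff_X_pow, mul_ite, mul_one, mul_zero]
  rw [Finset.sum_ite_eq (Finset.range (m+1)) j c]
  simp [Nat.lt_succ_of_le hj]

theorem evalP (K : Type) [Field K] (P : Polynomial K) (c : ℕ → K) (m : ℕ) (t : K)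
    (hP : P = ∑ j ∈ Finset.range (m+1), Polynomial.C (c j) * Polynomial.X ^ j) :
    P.eval t = ∑ j ∈ Finset.range (m+1), c j * t ^ j := by
  simp [hP, Polynomial.eval_finset_sum]

theorem myKey (K : Type) [CommRing K] (c : K) (a b : ℕ) : (C c * X 0 ^ a * X 1 ^ b : MvPolynomial (Fin 2) K)
      = monomial (Finsupp.single 0 a + Finsupp.single 1 b) c := by
  rw [C_mul_X_pow_eq_monomial, add_comm, monomial_single_add (n := (1 : Fin 2)), mul_comm]

theorem myDeg (n : Fin 2 →₀ ℕ) : n.degree = n 0 + n 1 := by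
  rw [Finsupp.degree_eq_weight_one]
  simp [Finsupp.weight_apply, Finsupp.sum_fintype, Fin.sum_univ_two]

theorem myRepr (K : Type) [CommRing K] (m : ℕ) (g : MvPolynomial (Fin 2) K) (hg : g.IsHomogeneous m) :
    g = ∑ j ∈ Finset.range (m+1),
      C (coeff (Finsupp.single 0 (m-j) + Finsupp.single 1 j) g) * X 0 ^ (m-j) * X 1 ^ j := by
  ext n
  rw [coeff_sum]
  simp only [myKey, coeff_monomial]
  by_cases hn : n 0 + n 1 = m
  · have hrep : (Finsupp.single (0 : Fin 2) (m - n 1) + Finsupp.single 1 (n 1)) = n := by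
      ext i
      fin_cases i <;> simp <;> omega
    rw [Finset.sum_eq_single (n 1)]
    · rw [if_pos hrep, hrep]
    · intro j hj hne
      rw [if_neg]
      intro heq
      exact hne (by simpa using (congrArg (fun f => f 1) heq))
    · intro hmem
      exact absurd (Finset.mem_range.mpr (by omega)) hmem
  · rw [hg.coeff_eq_zero (by rw [myDeg]; exact hn), Finset.sum_eq_zero]
    intro j hj
    rw [if_neg]
    intro heq
    apply hn
    have h0 := congrArg (fun f => f 0) heq
    have h1 := congrArg (fun f => f 1) heq
    simp at h0 h1
    rw [Finset.mem_range] at hj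
    omega

theorem factor (K : Type) [Field K] [IsAlgClosed K] (m : ℕ) (hm : 0 < m)
    (g : MvPolynomial (Fin 2) K) (hg : g.IsHomogeneous m) (hg0 : g ≠ 0) :
    ∃ L : Fin m → Fin 2 → K, (∀ i, L i ≠ 0) ∧ g = ∏ i, linForm K (L i) := by
  classical
  set c : ℕ → K := fun j => coeff (Finsupp.single 0 (m-j) + Finsupp.single 1 j) g with hc
  have hrepr : g = ∑ j ∈ Finset.range (m+1), C (c j) * X 0 ^ (m-j) * X 1 ^ j := myRepr K m g hg
  set P : Polynomial K := ∑ j ∈ Finset.range (m+1), Polynomial.C (c j) * Polynomial.X ^ j with hPdef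
  have hPc : ∀ j ≤ m, P.coeff j = c j := fun j hj => coeffP K P c m j hPdef hj
  have hPhigh : ∀ j, m < j → P.coeff j = 0 := by
    intro j hj
    rw [hPdef, Polynomial.finset_sum_coeff]
    apply Finset.sum_eq_zero
    intro j' hj'
    rw [Finset.mem_range] at hj'
    rw [Polynomial.coeff_C_mul, Polynomial.coeff_X_pow, if_neg (by omega), mul_zero]
  have hP0 : P ≠ 0 := by
    intro h
    apply hg0
    rw [hrepr]
    apply Finset.sum_eq_zero
    intro j hj
    rw [Finset.mem_range] at hj
    have : c j = 0 := by rw [← hPc j (by omega), h, Polynomial.coeff_zero]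
    simp [this]
  set e := P.natDegree with hedef
  have he : e ≤ m := Polynomial.natDegree_le_iff_coeff_eq_zero.mpr (fun j hj => hPhigh j hj)
  have hsplits : P.Splits := IsAlgClosed.splits P
  set a := P.leadingCoeff with hadef
  have ha : a ≠ 0 := Polynomial.leadingCoeff_ne_zero.mpr hP0
  have hfact : P = Polynomial.C a * (P.roots.map (fun ρ => Polynomial.X - Polynomial.C ρ)).prod :=
    hsplits.eq_prod_roots
  have hcard : Multiset.card P.roots = e := (Polynomial.splits_iff_card_roots).mp hsplits
  set l := P.roots.toList with hldef
  have hl : l.length = e := by rw [hldef, Multiset.length_toList, hcard]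
  have hlcoe : (l : Multiset K) = P.roots := Multiset.coe_toList _
  set L : ℕ → Fin 2 → K := fun i => if i < e then ![-(l.getD i 0), 1] else ![1, 0] with hLdef
  refine ⟨fun i => if (i : ℕ) = 0 then a • L 0 else L i, ?_, ?_⟩
  · intro i
    show (if (i : ℕ) = 0 then a • L 0 else L (i : ℕ)) ≠ 0
    by_cases h0 : (i : ℕ) = 0
    · rw [if_pos h0]
      intro h
      by_cases h1 : 0 < e
      · have := congrFun h 1
        simp [hLdef, h1] at this
        exact ha this
      · have := congrFun h 0
        simp [hLdef, h1] at this
        exact ha this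
    · rw [if_neg h0]
      intro h
      by_cases h1 : (i : ℕ) < e
      · have := congrFun h 1
        simp [hLdef, h1] at this
      · have := congrFun h 0
        simp [hLdef, h1] at this
  · apply MvPolynomial.funext
    intro v
    rw [hrepr, map_sum, map_prod]
    simp only [map_mul, eval_C, map_pow, eval_X]
    have hfacval : ∀ i : Fin m, eval v (linForm K (if (i : ℕ) = 0 then a • L 0 else L (i : ℕ)))
        = (if (i : ℕ) = 0 then a else 1) * (if (i : ℕ) < e then v 1 - l.getD (i : ℕ) 0 * v 0 else v 0) := by
      intro i
      by_cases h0 : (i : ℕ) = 0 <;> by_cases h1 : (i : ℕ) < e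
      · have h1' : 0 < e := h0 ▸ h1
        simp [h0, h1, h1', hLdef, eval_linForm]
        ring
      · have h1' : ¬ (0 < e) := h0 ▸ h1
        simp [h0, h1, h1', hLdef, eval_linForm]
      · simp [h0, h1, hLdef, eval_linForm]
        ring
      · simp [h0, h1, hLdef, eval_linForm]
    rw [Finset.prod_congr rfl (fun i _ => hfacval i)]
    rw [Finset.prod_mul_distrib]
    have hones : (∏ i : Fin m, if (i : ℕ) = 0 then a else 1) = a := by
      rw [Fin.prod_univ_eq_prod_range (fun i => if i = 0 then a else 1) m]
      rw [Finset.prod_ite_eq' (Finset.range m) 0 (fun _ => a)]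
      simp [Finset.mem_range, hm]
    rw [hones]
    have hsplit : (∏ i : Fin m, if (i : ℕ) < e then v 1 - l.getD (i : ℕ) 0 * v 0 else v 0)
        = (P.roots.map (fun ρ => v 1 - ρ * v 0)).prod * v 0 ^ (m - e) := by
      rw [Fin.prod_univ_eq_prod_range (fun n => if n < e then v 1 - l.getD n 0 * v 0 else v 0) m]
      have hme : m = e + (m - e) := by omega
      rw [hme, Finset.prod_range_add]
      congr 1
      · rw [Finset.prod_congr rfl (fun i hi => if_pos (Finset.mem_range.mp hi))]
        rw [← hl, listProd l (fun ρ => v 1 - ρ * v 0), ← hlcoe]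
        rw [← Multiset.prod_coe, ← Multiset.map_coe]
      · rw [Finset.prod_congr rfl (fun i _ => if_neg (by omega))]
        rw [Finset.prod_const, Finset.card_range]
        congr 1
        omega
    rw [hsplit]
    by_cases hv0 : v 0 = 0
    · rw [Finset.sum_eq_single m]
      · have hms : m - m = 0 := Nat.sub_self m
        rw [hv0, hms, pow_zero]
        simp only [mul_zero, sub_zero, Multiset.map_const', Multiset.prod_replicate, hcard]
        by_cases hem : e = m
        · have hcm : c m = a := by
            rw [← hPc m le_rfl, hadef, Polynomial.leadingCoeff, ← hedef, hem]
          have hme0 : m - e = 0 := by omega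
          rw [hme0, pow_zero, hcm, hem]
          ring
        · have hcm : c m = 0 := by
            rw [← hPc m le_rfl]
            exact Polynomial.coeff_eq_zero_of_natDegree_lt (by omega)
          rw [hcm, zero_pow (show m - e ≠ 0 by omega)]
          ring
      · intro j hj hne
        rw [Finset.mem_range] at hj
        rw [hv0, zero_pow (show m - j ≠ 0 by omega)]
        ring
      · intro h
        exact absurd (Finset.mem_range.mpr (by omega)) h
    · set t := v 1 / v 0 with htdef
      have hPt : P.eval t = ∑ j ∈ Finset.range (m+1), c j * t ^ j := evalP K P c m t hPdef
      have hPt2 : P.eval t = a * (P.roots.map (fun ρ => t - ρ)).prod := by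
        conv_lhs => rw [hfact]
        simp [Polynomial.eval_multiset_prod, Multiset.map_map, Function.comp]
      have hLHS : ∑ j ∈ Finset.range (m+1), c j * v 0 ^ (m-j) * v 1 ^ j = v 0 ^ m * P.eval t := by
        rw [hPt, Finset.mul_sum]
        apply Finset.sum_congr rfl
        intro j hj
        rw [Finset.mem_range] at hj
        rw [htdef, div_pow, pow_sub₀ (v 0) hv0 (by omega)]
        field_simp
      rw [hLHS, hPt2]
      have hQ : (P.roots.map (fun ρ => v 1 - ρ * v 0)).prod
          = (P.roots.map (fun ρ => t - ρ)).prod * v 0 ^ e := by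
        have hfun : (fun ρ => v 1 - ρ * v 0) = fun ρ => (t - ρ) * v 0 := by
          funext ρ
          rw [htdef]
          field_simp
        rw [hfun, Multiset.prod_map_mul]
        congr 1
        rw [Multiset.map_const', Multiset.prod_replicate, hcard]
      rw [hQ]
      rw [show v 0 ^ m = v 0 ^ e * v 0 ^ (m - e) from by rw [← pow_add]; congr 1; omega]
      ring

theorem linForm_hom {K : Type} [Field K] (c : Fin 2 → K) : (linForm K c).IsHomogeneous 1 := by
  apply MvPolynomial.IsHomogeneous.add <;>
    simpa using ((isHomogeneous_C _ _).mul (isHomogeneous_X _ _))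

theorem linForm_ne_zero {K : Type} [Field K] {c : Fin 2 → K} (hc : c ≠ 0) : linForm K c ≠ 0 := by
  intro h
  apply hc
  funext i
  fin_cases i
  · have := congrArg (eval ![1, 0]) h
    simpa [eval_linForm] using this
  · have := congrArg (eval ![0, 1]) h
    simpa [eval_linForm] using this

theorem homMon (K : Type) [Field K] (a b : ℕ) :
    (X 0 ^ a * X 1 ^ b : MvPolynomial (Fin 2) K).IsHomogeneous (a + b) := by
  have h := myKey K (1 : K) a b
  rw [map_one, one_mul] at h
  rw [h]
  apply isHomogeneous_monomial
  rw [myDeg]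
  simp

theorem coeff_gsum {K : Type} [Field K] (k : ℕ) (c : Fin (k+2) → K) (j : Fin (k+2)) :
    coeff (Finsupp.single 0 (k+1-(j:ℕ)) + Finsupp.single 1 (j:ℕ))
      (∑ j' : Fin (k+2), C (c j') * X 0 ^ (k+1-(j':ℕ)) * X 1 ^ (j':ℕ)
        : MvPolynomial (Fin 2) K) = c j := by
  rw [coeff_sum]
  simp only [myKey, coeff_monomial]
  rw [Finset.sum_eq_single j]
  · rw [if_pos rfl]
  · intro j' _ hne
    rw [if_neg]
    intro heq
    apply hne
    have := congrArg (fun f => f 1) heq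
    simp at this
    exact Fin.ext this
  · intro hmem
    exact absurd (Finset.mem_univ j) hmem

theorem bridge (K : Type) [Field K] (d k : ℕ) (hk : k < d / 2)
    (φ : Module.Dual K (MvPolynomial (Fin 2) K)) (c : Fin (k+2) → K) (i : Fin (d-k)) :
    (Matrix.of fun (i : Fin (d - k)) (j : Fin (k + 2)) =>
        φ (X 0 ^ (d - ((i : ℕ) + (j : ℕ))) * X 1 ^ ((i : ℕ) + (j : ℕ)))).mulVec c i
    = φ ((∑ j : Fin (k+2), C (c j) * X 0 ^ (k+1-(j:ℕ)) * X 1 ^ (j:ℕ))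
        * (X 0 ^ (d-k-1-(i:ℕ)) * X 1 ^ (i:ℕ))) := by
  have hd : 2*k+2 ≤ d := by omega
  have hij : (i : ℕ) ≤ d - k - 1 := by have := i.isLt; omega
  rw [Finset.sum_mul, map_sum, Matrix.mulVec]
  simp only [dotProduct, Matrix.of_apply]
  apply Finset.sum_congr rfl
  intro j _
  have hj : (j : ℕ) ≤ k + 1 := by have := j.isLt; omega
  have hmon : (X 0 ^ (k+1-(j:ℕ)) * X 1 ^ (j:ℕ)) * (X 0 ^ (d-k-1-(i:ℕ)) * X 1 ^ (i:ℕ))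
      = (X 0 ^ (d - ((i:ℕ)+(j:ℕ))) * X 1 ^ ((i:ℕ)+(j:ℕ)) : MvPolynomial (Fin 2) K) := by
    rw [mul_mul_mul_comm, ← pow_add, ← pow_add]
    have e1 : k+1-(j:ℕ) + (d-k-1-(i:ℕ)) = d - ((i:ℕ)+(j:ℕ)) := by omega
    have e2 : (j:ℕ) + (i:ℕ) = (i:ℕ)+(j:ℕ) := by omega
    rw [e1, e2]
  have hre : (C (c j) * X 0 ^ (k+1-(j:ℕ)) * X 1 ^ (j:ℕ)) * (X 0 ^ (d-k-1-(i:ℕ)) * X 1 ^ (i:ℕ))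
      = C (c j) * ((X 0 ^ (k+1-(j:ℕ)) * X 1 ^ (j:ℕ)) * (X 0 ^ (d-k-1-(i:ℕ)) * X 1 ^ (i:ℕ))
        : MvPolynomial (Fin 2) K) := by
    ring
  rw [hre, hmon, MvPolynomial.C_mul', map_smul, smul_eq_mul, mul_comm]

theorem rankKer (K : Type) [Field K] (m n r : ℕ) (M : Matrix (Fin m) (Fin n) K)
    (hnr : n = r + 1) : M.rank ≤ r ↔ ∃ c : Fin n → K, c ≠ 0 ∧ M.mulVec c = 0 := by
  have hrn := LinearMap.finrank_range_add_finrank_ker M.mulVecLin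
  simp only [Module.finrank_fintype_fun_eq_card, Fintype.card_fin] at hrn
  rw [Matrix.rank]
  constructor
  · intro hle
    have hker : LinearMap.ker M.mulVecLin ≠ ⊥ := by
      intro hbot
      rw [hbot, finrank_bot] at hrn
      omega
    obtain ⟨c, hc, hc0⟩ := Submodule.exists_mem_ne_zero_of_ne_bot hker
    exact ⟨c, hc0, hc⟩
  · rintro ⟨c, hc0, hc⟩
    have hmem : c ∈ LinearMap.ker M.mulVecLin := LinearMap.mem_ker.mpr (by simpa using hc)
    have hker : Module.finrank K (LinearMap.ker M.mulVecLin) ≠ 0 := by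
      intro h0
      have := Submodule.finrank_eq_zero.mp h0
      rw [this] at hmem
      exact hc0 (by simpa using hmem)
    omega

/-- Lemma 5 (`secante`): for `0 ≤ k < ⌊d/2⌋`, the `(d-k)×(k+2)` Hankel matrix of `φ` has
rank `≤ k+1` iff `φ(L₁⋯L_{k+1}·S_{d-k-1}) = 0` for some linear forms `L_i`. -/
theorem stmt5 (K : Type) [Field K] [IsAlgClosed K] [CharZero K] (d k : ℕ) (hk : k < d / 2)
    (φ : Module.Dual K (MvPolynomial (Fin 2) K)) :
    ((Matrix.of fun (i : Fin (d - k)) (j : Fin (k + 2)) =>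
        φ (X 0 ^ (d - ((i : ℕ) + (j : ℕ))) * X 1 ^ ((i : ℕ) + (j : ℕ)))).rank ≤ k + 1) ↔
    ∃ L : Fin (k + 1) → Fin 2 → K, (∀ i, L i ≠ 0) ∧
      ∀ h : MvPolynomial (Fin 2) K, h.IsHomogeneous (d - k - 1) →
        φ ((∏ i, linForm K (L i)) * h) = 0 := by
  have hd : 2*k+2 ≤ d := by omega
  rw [rankKer K (d-k) (k+2) (k+1) _ rfl]
  constructor
  · rintro ⟨c, hc0, hMc⟩
    set g : MvPolynomial (Fin 2) K := ∑ j : Fin (k+2), C (c j) * X 0 ^ (k+1-(j:ℕ)) * X 1 ^ (j:ℕ) with hgdef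
    have hghom : g.IsHomogeneous (k+1) := by
      apply MvPolynomial.IsHomogeneous.sum
      intro j _
      rw [myKey]
      apply isHomogeneous_monomial
      rw [myDeg]
      have := j.isLt
      simp [Finsupp.add_apply, Finsupp.single_apply]
      omega
    have hg0 : g ≠ 0 := by
      intro h
      apply hc0
      funext j
      rw [show c j = coeff (Finsupp.single 0 (k+1-(j:ℕ)) + Finsupp.single 1 (j:ℕ)) g from
        (coeff_gsum k c j).symm, h]
      simp
    obtain ⟨L, hL, hgL⟩ := factor K (k+1) (Nat.succ_pos k) g hghom hg0
    refine ⟨L, hL, ?_⟩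
    intro h hh
    rw [← hgL, myRepr K (d-k-1) h hh, Finset.mul_sum, map_sum]
    apply Finset.sum_eq_zero
    intro i hi
    rw [Finset.mem_range] at hi
    have hfin : i < d - k := by omega
    have hb := bridge K d k hk φ c ⟨i, hfin⟩
    rw [hMc] at hb
    simp only [Pi.zero_apply] at hb
    have hre : g * (C (coeff (Finsupp.single 0 (d-k-1-i) + Finsupp.single 1 i) h)
          * X 0 ^ (d-k-1-i) * X 1 ^ i)
        = C (coeff (Finsupp.single 0 (d-k-1-i) + Finsupp.single 1 i) h)
          * (g * (X 0 ^ (d-k-1-i) * X 1 ^ i)) := by rw [hgdef]; ring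
    rw [hre, MvPolynomial.C_mul', map_smul, smul_eq_mul, ← hb, mul_zero]
  · rintro ⟨L, hL0, hφ⟩
    set g := ∏ i, linForm K (L i) with hgdef
    have hghom : g.IsHomogeneous (k+1) := by
      have := MvPolynomial.IsHomogeneous.prod Finset.univ (fun i => linForm K (L i))
        (fun _ => 1) (fun i _ => linForm_hom (L i))
      simpa using this
    have hg0 : g ≠ 0 := by
      rw [hgdef]
      exact Finset.prod_ne_zero_iff.mpr (fun i _ => linForm_ne_zero (hL0 i))
    set c : Fin (k+2) → K :=
      fun j => coeff (Finsupp.single 0 (k+1-(j:ℕ)) + Finsupp.single 1 (j:ℕ)) g with hcdef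
    have hgsum : g = ∑ j : Fin (k+2), C (c j) * X 0 ^ (k+1-(j:ℕ)) * X 1 ^ (j:ℕ) := by
      conv_lhs => rw [myRepr K (k+1) g hghom]
      rw [← Fin.sum_univ_eq_sum_range
        (fun j => C (coeff (Finsupp.single 0 (k+1-j) + Finsupp.single 1 j) g)
          * X 0 ^ (k+1-j) * X 1 ^ j : ℕ → MvPolynomial (Fin 2) K) (k+2)]
    refine ⟨c, ?_, ?_⟩
    · intro h
      apply hg0
      rw [hgsum]
      apply Finset.sum_eq_zero
      intro j _
      rw [show c j = 0 from congrFun h j]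
      simp
    · funext i
      rw [Pi.zero_apply, bridge K d k hk φ c i, ← hgsum]
      apply hφ
      have := homMon K (d-k-1-(i:ℕ)) (i:ℕ)
      have hie : d-k-1-(i:ℕ) + (i:ℕ) = d-k-1 := by have := i.isLt; omega
      rwa [hie] at this
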